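/- Let p ≥ 2 and k ≥ 1 be integers, c = (c₁, …, c_k) ∈ ℂ^k, and define ‖η‖ := √((1/k) ∑_{j=1}^k |η_j|²) for η ∈ ℂ^k and R := max{‖c‖, 2^{1/(p-1)}}. For ζ ∈ ℂ^k, the following are equivalent: (1) the orbit of ζ under the componentwise map F_c : ζ ↦ (ζ₁^p + c₁, …, ζ_k^p + c_k) is bounded; (2) ‖F_c^m(ζ)‖ ≤ R for every positive integer m, i.e. √((1/k) ∑_{j=1}^k |f_{c_j}^m(ζ_j)|²) ≤ R for all m ≥ 1. -/

import Mathlib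

open Finset

private lemma mcnorm_eq (k : ℕ) (w : Fin k → ℂ) :
    Real.sqrt ((1 / (k : ℝ)) * ∑ j, ‖w j‖ ^ 2) =
      Real.sqrt (1 / (k : ℝ)) * ‖(WithLp.equiv 2 (Fin k → ℂ)).symm w‖ := by
  rw [EuclideanSpace.norm_eq, ← Real.sqrt_mul (by positivity)]
  simp

private lemma mcnorm_tri (k : ℕ) (u v : Fin k → ℂ) :
    Real.sqrt ((1 / (k : ℝ)) * ∑ j, ‖u j‖ ^ 2)
      - Real.sqrt ((1 / (k : ℝ)) * ∑ j, ‖v j‖ ^ 2)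
      ≤ Real.sqrt ((1 / (k : ℝ)) * ∑ j, ‖u j + v j‖ ^ 2) := by
  rw [mcnorm_eq, mcnorm_eq, mcnorm_eq, ← mul_sub]
  refine mul_le_mul_of_nonneg_left ?_ (Real.sqrt_nonneg _)
  have hE : (WithLp.equiv 2 (Fin k → ℂ)).symm (fun j => u j + v j)
      = (WithLp.equiv 2 (Fin k → ℂ)).symm u + (WithLp.equiv 2 (Fin k → ℂ)).symm v := rfl
  rw [hE]
  have := norm_sub_norm_le ((WithLp.equiv 2 (Fin k → ℂ)).symm u)
    (-(WithLp.equiv 2 (Fin k → ℂ)).symm v)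
  simpa [sub_neg_eq_add] using this

private lemma mcnorm_pow (p k : ℕ) (hp : 1 ≤ p) (hk : 1 ≤ k) (w : Fin k → ℂ) :
    Real.sqrt ((1 / (k : ℝ)) * ∑ j, ‖w j‖ ^ 2) ^ p
      ≤ Real.sqrt ((1 / (k : ℝ)) * ∑ j, ‖w j ^ p‖ ^ 2) := by
  have hk0 : (0:ℝ) < k := by exact_mod_cast hk
  rw [Real.le_sqrt (by positivity) (by positivity)]
  have hsq : (Real.sqrt ((1 / (k : ℝ)) * ∑ j, ‖w j‖ ^ 2) ^ p) ^ 2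
      = ((1 / (k : ℝ)) * ∑ j, ‖w j‖ ^ 2) ^ p := by
    rw [← pow_mul, mul_comm p 2, pow_mul, Real.sq_sqrt (by positivity)]
  rw [hsq]
  have h := pow_sum_div_card_le_sum_pow (s := (Finset.univ : Finset (Fin k)))
    (f := fun j => ‖w j‖ ^ 2) (fun _ _ => by positivity) (p - 1)
  have hpe : p - 1 + 1 = p := by omega
  rw [hpe] at h
  simp only [Finset.card_univ, Fintype.card_fin] at h
  have hrw : ∀ j, ‖w j ^ p‖ ^ 2 = (‖w j‖ ^ 2) ^ p := by
    intro j; rw [norm_pow, ← pow_mul, ← pow_mul, mul_comm]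
  simp only [hrw]
  have hkp : ((k:ℝ)) ^ p = (k:ℝ) ^ (p - 1) * k := by
    rw [← pow_succ, hpe]
  rw [mul_pow, div_pow, one_pow, hkp]
  calc 1 / ((k:ℝ) ^ (p-1) * k) * (∑ j, ‖w j‖ ^ 2) ^ p
      = ((∑ j, ‖w j‖ ^ 2) ^ p / (k:ℝ) ^ (p-1)) * (1 / k) := by ring
    _ ≤ (∑ j, (‖w j‖ ^ 2) ^ p) * (1 / k) := by
        apply mul_le_mul_of_nonneg_right h (by positivity)
    _ = 1 / (k:ℝ) * ∑ j, (‖w j‖ ^ 2) ^ p := by ring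

private lemma mcnorm_le_pinorm (k : ℕ) (w : Fin k → ℂ) :
    Real.sqrt ((1 / (k : ℝ)) * ∑ j, ‖w j‖ ^ 2) ≤ ‖w‖ := by
  rcases Nat.eq_zero_or_pos k with hk | hk
  · subst hk; simp
  have hk0 : (0:ℝ) < k := by exact_mod_cast hk
  have h1 : (1 / (k:ℝ)) * ∑ j, ‖w j‖ ^ 2 ≤ ‖w‖ ^ 2 := by
    rw [one_div, inv_mul_le_iff₀ hk0]
    calc ∑ j, ‖w j‖ ^ 2 ≤ ∑ _j : Fin k, ‖w‖ ^ 2 := by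
          refine Finset.sum_le_sum fun j _ => ?_
          have : ‖w j‖ ≤ ‖w‖ := norm_le_pi_norm w j
          exact pow_le_pow_left₀ (norm_nonneg _) this 2
      _ = (k:ℝ) * ‖w‖ ^ 2 := by
          rw [Finset.sum_const, Finset.card_univ, Fintype.card_fin, nsmul_eq_mul]
  calc Real.sqrt ((1 / (k : ℝ)) * ∑ j, ‖w j‖ ^ 2)
      ≤ Real.sqrt (‖w‖ ^ 2) := Real.sqrt_le_sqrt h1
    _ = ‖w‖ := Real.sqrt_sq (norm_nonneg w)

private lemma mcnorm_coord (k : ℕ) (hk : 1 ≤ k) (w : Fin k → ℂ) (j : Fin k) :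
    ‖w j‖ ≤
      Real.sqrt k * Real.sqrt ((1 / (k : ℝ)) * ∑ i, ‖w i‖ ^ 2) := by
  have hk0 : (0:ℝ) < k := by exact_mod_cast hk
  rw [← Real.sqrt_mul (le_of_lt hk0)]
  have he : (k:ℝ) * ((1 / (k:ℝ)) * ∑ i, ‖w i‖ ^ 2)
      = ∑ i, ‖w i‖ ^ 2 := by field_simp
  rw [he]
  calc ‖w j‖ = Real.sqrt (‖w j‖ ^ 2) := by
        rw [Real.sqrt_sq (norm_nonneg _)]
    _ ≤ Real.sqrt (∑ i, ‖w i‖ ^ 2) := by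
        apply Real.sqrt_le_sqrt
        exact Finset.single_le_sum (f := fun i => ‖w i‖ ^ 2)
          (fun i _ => by positivity) (Finset.mem_univ j)

/-- With the multicomplex norm `‖η‖ = √((1/k) ∑ |η_j|²)` and
`R = max {‖c‖, 2^(1/(p-1))}`, the orbit of `ζ ∈ ℂ^k` under the componentwise map
`F_c` is bounded iff `‖F_c^m(ζ)‖ ≤ R` for every positive integer `m`. -/
theorem multicomplex_filledJulia_iff_norm_le (p k : ℕ) (hp : 2 ≤ p) (hk : 1 ≤ k)
    (c ζ : Fin k → ℂ)
    (R : ℝ)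
    (hR : R = max (Real.sqrt ((1 / (k : ℝ)) * ∑ j, ‖c j‖ ^ 2))
      ((2 : ℝ) ^ (((p : ℝ) - 1)⁻¹))) :
    Bornology.IsBounded
        (Set.range fun n : ℕ =>
          (fun w : Fin k → ℂ => fun j => w j ^ p + c j)^[n + 1] ζ) ↔
      ∀ m : ℕ, 1 ≤ m →
        Real.sqrt ((1 / (k : ℝ)) *
          ∑ j, ‖(fun w : Fin k → ℂ => fun j => w j ^ p + c j)^[m] ζ j‖ ^ 2) ≤ R := by
  set F : (Fin k → ℂ) → (Fin k → ℂ) := fun w : Fin k → ℂ => fun j => w j ^ p + c j with hF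
  set N : (Fin k → ℂ) → ℝ :=
    fun w => Real.sqrt ((1 / (k : ℝ)) * ∑ j, ‖w j‖ ^ 2) with hN
  have hN0 : ∀ w, 0 ≤ N w := fun w => Real.sqrt_nonneg _
  have hNc : N c ≤ R := by rw [hR]; exact le_max_left _ _
  have h2R : (2 : ℝ) ^ (((p : ℝ) - 1)⁻¹) ≤ R := by rw [hR]; exact le_max_right _ _
  have hR0 : 0 < R := lt_of_lt_of_le (Real.rpow_pos_of_pos (by norm_num) _) h2R
  have hRp : 2 ≤ R ^ (p - 1) := by
    have he : ((2 : ℝ) ^ (((p : ℝ) - 1)⁻¹)) ^ (p - 1) = 2 := by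
      rw [← Real.rpow_natCast ((2:ℝ) ^ (((p : ℝ) - 1)⁻¹)) (p - 1),
        ← Real.rpow_mul (by norm_num)]
      have hc : ((p - 1 : ℕ) : ℝ) = (p : ℝ) - 1 := by
        push_cast [Nat.cast_sub (by omega : 1 ≤ p)]; ring
      rw [hc, inv_mul_cancel₀ (by
        have : (2:ℝ) ≤ (p:ℝ) := by exact_mod_cast hp
        linarith), Real.rpow_one]
    calc (2:ℝ) = ((2 : ℝ) ^ (((p : ℝ) - 1)⁻¹)) ^ (p - 1) := he.symm
      _ ≤ R ^ (p - 1) := pow_le_pow_left₀ (Real.rpow_nonneg (by norm_num) _) h2R _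
  constructor
  · intro hb m hm
    by_contra hgt
    push_neg at hgt
    obtain ⟨C, hC⟩ := isBounded_iff_forall_norm_le.mp hb
    set A := N (F^[m] ζ) with hA
    have hRA : R < A := hgt
    have hA0 : 0 < A := hR0.trans hRA
    have hs1 : 1 < A ^ (p - 1) - 1 := by
      have : R ^ (p-1) < A ^ (p-1) :=
        pow_lt_pow_left₀ hRA (le_of_lt hR0) (by omega)
      linarith
    set s := A ^ (p - 1) - 1 with hsdef
    have hs0 : 0 < s := by linarith
    have grow : ∀ n : ℕ, A * s ^ n ≤ N (F^[m + n] ζ) := by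
      intro n
      induction n with
      | zero => simp [hA]
      | succ n ih =>
        set w := F^[m + n] ζ with hw
        have hsn1 : (1:ℝ) ≤ s ^ n := one_le_pow₀ (le_of_lt hs1)
        have hAw : A ≤ N w := le_trans (by nlinarith) ih
        have hRw : R ≤ N w := le_trans (le_of_lt hRA) hAw
        have step : s * N w ≤ N (F w) := by
          have h1 : N (fun j => w j ^ p) - N c ≤ N (fun j => w j ^ p + c j) :=
            mcnorm_tri k _ c
          have h2 : N w ^ p ≤ N (fun j => w j ^ p) := mcnorm_pow p k (by omega) hk w
          have h3 : N w ^ (p - 1) * N w = N w ^ p := by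
            rw [← pow_succ]; congr 1; omega
          have h4 : A ^ (p-1) ≤ N w ^ (p-1) := pow_le_pow_left₀ (le_of_lt hA0) hAw _
          have h5 : N (fun j => w j ^ p + c j) = N (F w) := rfl
          nlinarith [hN0 w]
        have hit : F^[m + (n + 1)] ζ = F (F^[m + n] ζ) := by
          rw [show m + (n + 1) = (m + n) + 1 by omega, Function.iterate_succ_apply']
        calc A * s ^ (n + 1) = s * (A * s ^ n) := by ring
          _ ≤ s * N w := mul_le_mul_of_nonneg_left ih (le_of_lt hs0)
          _ ≤ N (F w) := step
          _ = N (F^[m + (n + 1)] ζ) := by rw [hit]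
    obtain ⟨n, hn⟩ := pow_unbounded_of_one_lt (C / A) hs1
    have h1 : C < A * s ^ n := by
      rw [div_lt_iff₀ hA0] at hn; linarith [hn]
    have h2 : N (F^[m + n] ζ) ≤ ‖F^[m + n] ζ‖ := mcnorm_le_pinorm k _
    have h3 : ‖F^[m + n] ζ‖ ≤ C := by
      refine hC _ ⟨m + n - 1, ?_⟩
      show F^[m + n - 1 + 1] ζ = F^[m + n] ζ
      rw [show m + n - 1 + 1 = m + n from by omega]
    linarith [grow n]
  · intro h
    rw [isBounded_iff_forall_norm_le]
    refine ⟨Real.sqrt k * R, fun x hx => ?_⟩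
    obtain ⟨n, rfl⟩ := hx
    rw [pi_norm_le_iff_of_nonneg (by positivity)]
    intro j
    have hm := h (n + 1) (by omega)
    calc ‖F^[n+1] ζ j‖ ≤ Real.sqrt k * N (F^[n+1] ζ) := mcnorm_coord k hk _ j
      _ ≤ Real.sqrt k * R := mul_le_mul_of_nonneg_left hm (Real.sqrt_nonneg _)
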